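/- arXiv:2301.05304 — 4 statements merged into one kernel-verified Lean document; each statement's English description precedes it below -/
import Mathlib

section
/- Define b_ν(λ) = c_ν(λ) if (ν-ρ+2)/2 is a nonnegative integer, and b_ν(λ) = λ·c_ν(λ) otherwise, where c_ν(λ) = 2^{ρ-iλ} Γ(ρ-1) Γ(iλ) / (Γ((iλ+ρ+ν)/2) Γ((iλ+ρ-ν-2)/2)). Then for ν > ρ-2, the function λ ↦ b_ν(λ) has no zeros on the real line. -/
open Filter

/-- The Harish-Chandra c-function
`c_ν(λ) = 2^(ρ-iλ) Γ(ρ-1) Γ(iλ) / (Γ((iλ+ρ+ν)/2) Γ((iλ+ρ-ν-2)/2))`. -/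
noncomputable def cfun (ρ ν : ℕ) (lam : ℝ) : ℂ :=
  2 ^ ((ρ : ℂ) - Complex.I * lam) * Complex.Gamma ((ρ : ℂ) - 1) *
      Complex.Gamma (Complex.I * lam) /
    (Complex.Gamma ((Complex.I * lam + ρ + ν) / 2) *
      Complex.Gamma ((Complex.I * lam + ρ - ν - 2) / 2))

/-- `b_ν(λ) = c_ν(λ)` if `(ν-ρ+2)/2` is a nonnegative integer, and
`b_ν(λ) = λ c_ν(λ)` otherwise. -/
noncomputable def bfun (ρ ν : ℕ) (lam : ℝ) : ℂ :=
  if Even (ν + 2 - ρ) then cfun ρ ν lam else lam * cfun ρ ν lam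

lemma I_mul_ne {lam : ℝ} (hlam : lam ≠ 0) {w : ℂ} (hw : w.im = 0) : Complex.I * lam ≠ w := by
  intro h
  have := congrArg Complex.im h
  rw [hw] at this
  simp at this
  exact hlam this

lemma Gamma_im_ne {lam : ℝ} (hlam : lam ≠ 0) {a : ℂ} (ha : a.im = 0) :
    Complex.Gamma ((Complex.I * lam + a) / 2) ≠ 0 := by
  refine Complex.Gamma_ne_zero fun m h => ?_
  exact I_mul_ne hlam (w := -2*m - a) (by simp [ha]) (by linear_combination 2*h)

lemma Gamma_I_add_one_ne {lam : ℝ} : Complex.Gamma (Complex.I * lam + 1) ≠ 0 := by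
  rcases eq_or_ne lam 0 with h | h
  · simp [h, Complex.Gamma_one]
  · refine Complex.Gamma_ne_zero fun m hm => ?_
    exact I_mul_ne h (w := -m - 1) (by simp) (by linear_combination hm)

lemma Gamma_I_half_add_one_ne {lam : ℝ} : Complex.Gamma (Complex.I * lam / 2 + 1) ≠ 0 := by
  rcases eq_or_ne lam 0 with h | h
  · simp [h, Complex.Gamma_one]
  · refine Complex.Gamma_ne_zero fun m hm => ?_
    exact I_mul_ne h (w := -2*m - 2) (by simp) (by linear_combination 2*hm)

lemma real_ne_neg_nat {x : ℝ} (hx : 0 < x) (m : ℕ) : (x : ℂ) ≠ -m := by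
  intro h
  have h1 : x = -(m : ℝ) := by exact_mod_cast h
  have h2 : (0:ℝ) ≤ (m : ℝ) := Nat.cast_nonneg m
  linarith

lemma gamma_prod (m : ℕ) : ∀ z : ℂ, (∀ k : ℕ, k ≤ m → z - k ≠ 0) →
    Complex.Gamma (z - m) * ∏ k ∈ Finset.range (m+1), (z - k) = Complex.Gamma (z + 1) := by
  induction m with
  | zero =>
      intro z h
      have h0 : z ≠ 0 := by simpa using h 0 le_rfl
      simp [Complex.Gamma_add_one z h0, mul_comm]
  | succ m ih =>
      intro z h
      have h1 : z - (m+1 : ℕ) ≠ 0 := h (m+1) le_rfl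
      have e : (z - (m+1 : ℕ)) + 1 = z - m := by push_cast; ring
      have h2 := Complex.Gamma_add_one (z - (m+1:ℕ)) h1
      rw [e] at h2
      rw [Finset.prod_range_succ, show Complex.Gamma (z - ((m+1:ℕ):ℂ)) *
        ((∏ k ∈ Finset.range (m+1), (z - k)) * (z - ((m+1:ℕ):ℂ))) =
        (z - ((m+1:ℕ):ℂ)) * Complex.Gamma (z - ((m+1:ℕ):ℂ)) * ∏ k ∈ Finset.range (m+1), (z - k)
        from by ring, ← h2]
      exact ih z fun k hk => h k (by omega)

lemma contGamma {f : ℝ → ℂ} (hf : Continuous f) {x : ℝ} (h : ∀ m : ℕ, f x ≠ -m) :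
    ContinuousAt (fun t => Complex.Gamma (f t)) x :=
  (Complex.differentiableAt_Gamma _ h).continuousAt.comp hf.continuousAt

lemma cfun_ne_zero (ρ ν : ℕ) (hρ3 : 3 ≤ ρ) {lam : ℝ} (hlam : lam ≠ 0) :
    cfun ρ ν lam ≠ 0 := by
  have hρr : (3:ℝ) ≤ (ρ:ℝ) := by exact_mod_cast hρ3
  apply div_ne_zero
  · refine mul_ne_zero (mul_ne_zero ?_ ?_) ?_
    · simp [Complex.cpow_eq_zero_iff]
    · refine Complex.Gamma_ne_zero_of_re_pos ?_
      simp only [Complex.sub_re, Complex.natCast_re, Complex.one_re]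
      linarith
    · exact Complex.Gamma_ne_zero fun m hm => I_mul_ne hlam (w := -m) (by simp) hm
  · refine mul_ne_zero ?_ ?_
    · rw [show Complex.I * lam + ρ + ν = Complex.I * lam + ((ρ:ℂ) + ν) from by ring]
      exact Gamma_im_ne hlam (by simp)
    · rw [show Complex.I * lam + ρ - ν - 2 = Complex.I * lam + ((ρ:ℂ) - ν - 2) from by ring]
      exact Gamma_im_ne hlam (by simp)

lemma even_key {w A C D E Q : ℂ} (hw : w ≠ 0) (hD : D ≠ 0) (hE : E ≠ 0) (hQ : Q ≠ 0) :
    A * (C / w) / (D * (E / (Q * (w / 2)))) = A * C * Q / (2 * D * E) := by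
  field_simp

lemma odd_key {l A C D : ℂ} (hI : Complex.I * l ≠ 0) :
    l * (A * (C / (Complex.I * l)) / D) = -Complex.I * (A * C) / D := by
  have key : l / (Complex.I * l) = -Complex.I := by
    rw [div_eq_iff hI]; linear_combination l * Complex.I_sq
  calc l * (A * (C / (Complex.I * l)) / D) = (l / (Complex.I * l)) * (A * C / D) := by ring
    _ = -Complex.I * (A * C) / D := by rw [key]; ring

/-- For `ν > ρ - 2` (`ρ = 2n+1`), the function `b_ν` has no zeros on the real line:
it is nonzero at every `λ ≠ 0` and its limiting value at `λ = 0` (where the formula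
is interpreted by the limit) is nonzero. -/
theorem stmt4 (n ρ ν : ℕ) (hn : 1 ≤ n) (hρ : ρ = 2 * n + 1) (hν : ρ - 2 < ν) :
    (∀ lam : ℝ, lam ≠ 0 → bfun ρ ν lam ≠ 0) ∧
      ∃ L : ℂ, L ≠ 0 ∧
        Tendsto (fun lam : ℝ => bfun ρ ν lam) (nhdsWithin 0 {0}ᶜ) (nhds L) := by
  have hρ3 : 3 ≤ ρ := by omega
  have hν2 : ρ + 1 ≤ ν + 2 := by omega
  have hρr : (3:ℝ) ≤ (ρ:ℝ) := by exact_mod_cast hρ3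
  have hΓρ : Complex.Gamma ((ρ:ℂ) - 1) ≠ 0 := by
    refine Complex.Gamma_ne_zero_of_re_pos ?_
    simp only [Complex.sub_re, Complex.natCast_re, Complex.one_re]
    linarith
  have hcontI : Continuous fun lam : ℝ => Complex.I * (lam:ℂ) :=
    continuous_const.mul Complex.continuous_ofReal
  have hcpow : ContinuousAt (fun lam : ℝ => (2:ℂ) ^ ((ρ:ℂ) - Complex.I * lam)) 0 :=
    (continuousAt_const_cpow two_ne_zero).comp ((continuous_const.sub hcontI).continuousAt)
  have hpt1 : ∀ m : ℕ, Complex.I * ((0:ℝ):ℂ) + 1 ≠ -m := by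
    intro m
    rw [show Complex.I * ((0:ℝ):ℂ) + 1 = (((1:ℝ)):ℂ) from by norm_num]
    exact real_ne_neg_nat one_pos m
  have hcontG1 : ContinuousAt (fun lam : ℝ => Complex.Gamma (Complex.I * lam + 1)) 0 :=
    contGamma (hcontI.add continuous_const) hpt1
  have hptD : ∀ m : ℕ, (Complex.I * ((0:ℝ):ℂ) + ρ + ν) / 2 ≠ -m := by
    intro m
    rw [show (Complex.I * ((0:ℝ):ℂ) + ρ + ν) / 2 = ((((ρ:ℝ) + ν)/2 : ℝ):ℂ) from by
      push_cast; norm_num]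
    refine real_ne_neg_nat (by positivity) m
  have hcontD : ContinuousAt (fun lam : ℝ => Complex.Gamma ((Complex.I * lam + ρ + ν) / 2)) 0 :=
    contGamma (((hcontI.add continuous_const).add continuous_const).div_const 2) hptD
  have hDne0 : Complex.Gamma ((Complex.I * ((0:ℝ):ℂ) + ρ + ν) / 2) ≠ 0 :=
    Complex.Gamma_ne_zero hptD
  constructor
  · intro lam hlam
    have hc := cfun_ne_zero ρ ν hρ3 hlam
    unfold bfun
    split
    · exact hc
    · exact mul_ne_zero (by exact_mod_cast Complex.ofReal_ne_zero.mpr hlam) hc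
  · by_cases hpar : Even (ν + 2 - ρ)
    · -- even case
      obtain ⟨m, hm⟩ := hpar
      have hnat : ν + 2 = ρ + 2*m := by omega
      have hc : ((ν:ℂ)) + 2 = (ρ:ℂ) + 2*m := by exact_mod_cast hnat
      set g : ℝ → ℂ := fun lam =>
        2 ^ ((ρ:ℂ) - Complex.I * lam) * Complex.Gamma ((ρ:ℂ) - 1) *
          Complex.Gamma (Complex.I * lam + 1) *
          (∏ k ∈ Finset.range m, (Complex.I * lam / 2 - (k+1))) /
        (2 * Complex.Gamma ((Complex.I * lam + ρ + ν) / 2) *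
          Complex.Gamma (Complex.I * lam / 2 + 1)) with hg
      have heq : ∀ lam : ℝ, lam ≠ 0 → cfun ρ ν lam = g lam := by
        intro lam hlam
        have hIl : Complex.I * (lam:ℂ) ≠ 0 := I_mul_ne hlam (by simp)
        have hfac : ∀ k : ℕ, k ≤ m → Complex.I * lam / 2 - (k:ℂ) ≠ 0 := by
          intro k hk h
          exact I_mul_ne hlam (w := 2*(k:ℂ)) (by simp) (by linear_combination 2*h)
        have hprod := gamma_prod m (Complex.I * lam / 2) hfac
        have hP : ∏ k ∈ Finset.range (m+1), (Complex.I * lam / 2 - k) =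
            (∏ k ∈ Finset.range m, (Complex.I * lam / 2 - (k+1))) * (Complex.I * lam / 2) := by
          rw [Finset.prod_range_succ']
          push_cast
          norm_num
        have hQ : (∏ k ∈ Finset.range m, (Complex.I * lam / 2 - ((k:ℂ)+1))) ≠ 0 := by
          refine Finset.prod_ne_zero_iff.mpr fun k hk h => ?_
          exact I_mul_ne hlam (w := 2*(k:ℂ)+2) (by simp) (by linear_combination 2*h)
        have hIl2 : Complex.I * (lam:ℂ) / 2 ≠ 0 := by
          intro h
          exact I_mul_ne hlam (w := 0) (by simp) (by linear_combination 2*h)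
        have hden : Complex.Gamma (Complex.I * lam / 2 - m) =
            Complex.Gamma (Complex.I * lam / 2 + 1) /
              ((∏ k ∈ Finset.range m, (Complex.I * lam / 2 - ((k:ℂ)+1))) *
                (Complex.I * lam / 2)) := by
          rw [eq_div_iff (mul_ne_zero hQ hIl2), ← hP]
          exact hprod
        have e1 : (Complex.I * lam + ρ - ν - 2) / 2 = Complex.I * lam / 2 - m := by
          linear_combination (-1/2 : ℂ) * hc
        have hGil : Complex.Gamma (Complex.I * lam) =
            Complex.Gamma (Complex.I * lam + 1) / (Complex.I * lam) := by
          rw [Complex.Gamma_add_one _ hIl, mul_div_cancel_left₀ _ hIl]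
        have hD : Complex.Gamma ((Complex.I * lam + ρ + ν) / 2) ≠ 0 := by
          rw [show Complex.I * lam + ρ + ν = Complex.I * lam + ((ρ:ℂ) + ν) from by ring]
          exact Gamma_im_ne hlam (by simp)
        have hE : Complex.Gamma (Complex.I * lam / 2 + 1) ≠ 0 := Gamma_I_half_add_one_ne
        rw [hg]
        simp only [cfun]
        rw [e1, hGil, hden]
        exact even_key hIl hD hE hQ
      have hcontQ : Continuous fun lam : ℝ =>
          ∏ k ∈ Finset.range m, (Complex.I * (lam:ℂ) / 2 - ((k:ℂ)+1)) := by
        refine continuous_finset_prod _ fun k _ => ?_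
        exact (hcontI.div_const 2).sub continuous_const
      have hptE : ∀ j : ℕ, Complex.I * ((0:ℝ):ℂ) / 2 + 1 ≠ -j := by
        intro j
        rw [show Complex.I * ((0:ℝ):ℂ) / 2 + 1 = (((1:ℝ)):ℂ) from by norm_num]
        exact real_ne_neg_nat one_pos j
      have hcontE : ContinuousAt
          (fun lam : ℝ => Complex.Gamma (Complex.I * lam / 2 + 1)) 0 :=
        contGamma ((hcontI.div_const 2).add continuous_const) hptE
      have hgcont : ContinuousAt g 0 := by
        rw [hg]
        refine ContinuousAt.div (((hcpow.mul continuousAt_const).mul hcontG1).mul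
          hcontQ.continuousAt) ((continuousAt_const.mul hcontD).mul hcontE) ?_
        refine mul_ne_zero (mul_ne_zero two_ne_zero hDne0) (Complex.Gamma_ne_zero hptE)
      have hg0 : g 0 ≠ 0 := by
        rw [hg]
        refine div_ne_zero (mul_ne_zero (mul_ne_zero (mul_ne_zero ?_ hΓρ)
          (Complex.Gamma_ne_zero hpt1)) ?_)
          (mul_ne_zero (mul_ne_zero two_ne_zero hDne0) (Complex.Gamma_ne_zero hptE))
        · simp [Complex.cpow_eq_zero_iff]
        · refine Finset.prod_ne_zero_iff.mpr fun k hk h => ?_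
          have : ((k:ℂ) + 1) = 0 := by linear_combination -h + (by norm_num : Complex.I * ((0:ℝ):ℂ) / 2 = 0)
          exact Nat.cast_add_one_ne_zero k this
      refine ⟨g 0, hg0, ?_⟩
      have ht : Tendsto g (nhdsWithin 0 {0}ᶜ) (nhds (g 0)) :=
        hgcont.tendsto.mono_left nhdsWithin_le_nhds
      refine ht.congr' ?_
      filter_upwards [self_mem_nhdsWithin] with lam hlam
      have h1 : bfun ρ ν lam = cfun ρ ν lam := by
        unfold bfun; rw [if_pos ⟨m, hm⟩]
      rw [h1, (heq lam hlam)]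
    · -- odd case
      set g : ℝ → ℂ := fun lam =>
        -Complex.I * (2 ^ ((ρ:ℂ) - Complex.I * lam) * Complex.Gamma ((ρ:ℂ) - 1) *
          Complex.Gamma (Complex.I * lam + 1)) /
        (Complex.Gamma ((Complex.I * lam + ρ + ν) / 2) *
          Complex.Gamma ((Complex.I * lam + ρ - ν - 2) / 2)) with hg
      have hptE : ∀ j : ℕ, (Complex.I * ((0:ℝ):ℂ) + ρ - ν - 2) / 2 ≠ -j := by
        intro j h
        rw [show Complex.I * ((0:ℝ):ℂ) = 0 from by norm_num] at h
        have hc : ((ν:ℂ)) + 2 = (ρ:ℂ) + 2*j := by linear_combination -2*h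
        have hc' : ν + 2 = ρ + 2*j := by exact_mod_cast hc
        exact hpar ⟨j, by omega⟩
      have hcontE : ContinuousAt
          (fun lam : ℝ => Complex.Gamma ((Complex.I * lam + ρ - ν - 2) / 2)) 0 :=
        contGamma ((((hcontI.add continuous_const).sub continuous_const).sub
          continuous_const).div_const 2) hptE
      have hEne0 : Complex.Gamma ((Complex.I * ((0:ℝ):ℂ) + ρ - ν - 2) / 2) ≠ 0 :=
        Complex.Gamma_ne_zero hptE
      have heq : ∀ lam : ℝ, lam ≠ 0 → (lam:ℂ) * cfun ρ ν lam = g lam := by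
        intro lam hlam
        have hIl : Complex.I * (lam:ℂ) ≠ 0 := I_mul_ne hlam (by simp)
        have hGil : Complex.Gamma (Complex.I * lam) =
            Complex.Gamma (Complex.I * lam + 1) / (Complex.I * lam) := by
          rw [Complex.Gamma_add_one _ hIl, mul_div_cancel_left₀ _ hIl]
        have hD : Complex.Gamma ((Complex.I * lam + ρ + ν) / 2) ≠ 0 := by
          rw [show Complex.I * lam + ρ + ν = Complex.I * lam + ((ρ:ℂ) + ν) from by ring]
          exact Gamma_im_ne hlam (by simp)
        have hE : Complex.Gamma ((Complex.I * lam + ρ - ν - 2) / 2) ≠ 0 := by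
          rw [show Complex.I * lam + ρ - ν - 2 = Complex.I * lam + ((ρ:ℂ) - ν - 2) from by ring]
          exact Gamma_im_ne hlam (by simp)
        rw [hg]
        simp only [cfun]
        rw [hGil]
        exact odd_key hIl
      have hgcont : ContinuousAt g 0 := by
        rw [hg]
        refine ContinuousAt.div (continuousAt_const.mul ((hcpow.mul continuousAt_const).mul
          hcontG1)) (hcontD.mul hcontE) (mul_ne_zero hDne0 hEne0)
      have hg0 : g 0 ≠ 0 := by
        rw [hg]
        refine div_ne_zero (mul_ne_zero (neg_ne_zero.mpr Complex.I_ne_zero)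
          (mul_ne_zero (mul_ne_zero ?_ hΓρ) (Complex.Gamma_ne_zero hpt1)))
          (mul_ne_zero hDne0 hEne0)
        simp [Complex.cpow_eq_zero_iff]
      refine ⟨g 0, hg0, ?_⟩
      have ht : Tendsto g (nhdsWithin 0 {0}ᶜ) (nhds (g 0)) :=
        hgcont.tendsto.mono_left nhdsWithin_le_nhds
      refine ht.congr' ?_
      filter_upwards [self_mem_nhdsWithin] with lam hlam
      have h1 : bfun ρ ν lam = lam * cfun ρ ν lam := by
        unfold bfun; rw [if_neg hpar]
      rw [h1, (heq lam hlam)]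
end

section
/- There exists a constant C > 0 such that for all real λ, C^{-1}(1+λ²)^{(2ρ-5)/4} ≤ |λ c_ν(λ)|^{-1} ≤ C (1+λ²)^{(2ρ-5)/4}, where c_ν(λ) = 2^{ρ-iλ} Γ(ρ-1) Γ(iλ) / (Γ((iλ+ρ+ν)/2) Γ((iλ+ρ-ν-2)/2)), assuming (ν-ρ+2)/2 is not a nonnegative integer and ν > ρ-2. -/
open Filter

open Complex Finset Real

lemma gamma_shift (z : ℂ) (n : ℕ) (h : ∀ k < n, z + k ≠ 0) :
    Complex.Gamma (z + n) = (∏ k ∈ Finset.range n, (z + k)) * Complex.Gamma z := by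
  induction n with
  | zero => simp
  | succ n ih =>
    have h1 : z + (n:ℂ) ≠ 0 := h n (Nat.lt_succ_self n)
    have e : (z + (n+1:ℕ)) = (z + n) + 1 := by push_cast; ring
    rw [e, Complex.Gamma_add_one _ h1, ih (fun k hk => h k (hk.trans (Nat.lt_succ_self n))),
      Finset.prod_range_succ]
    ring

lemma normSq_Gamma_I (lam : ℝ) (hlam : lam ≠ 0) :
    Complex.normSq (Complex.Gamma (Complex.I * lam)) * (lam * Real.sinh (π * lam)) = π := by
  have h0 : -(Complex.I * lam) ≠ 0 := by simp [Complex.ext_iff, hlam]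
  have hconj : (starRingEnd ℂ) (Complex.Gamma (Complex.I * lam)) =
      Complex.Gamma (-(Complex.I * lam)) := by
    rw [← Complex.Gamma_conj]; congr 1; simp [Complex.ext_iff]
  have h1 : Complex.Gamma (-(Complex.I * lam) + 1) = -(Complex.I * lam) *
      Complex.Gamma (-(Complex.I * lam)) := Complex.Gamma_add_one _ h0
  have hsin : Complex.sin (π * (Complex.I * lam)) =
      (Real.sinh (π * lam) : ℂ) * Complex.I := by
    have h : (π : ℂ) * (Complex.I * lam) = ((π * lam : ℝ) : ℂ) * Complex.I := by push_cast; ring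
    rw [h, Complex.sin_mul_I, ← Complex.ofReal_sinh]
  have hS : ((Real.sinh (π * lam) : ℂ)) * Complex.I ≠ 0 := by
    simp only [ne_eq, mul_eq_zero, Complex.I_ne_zero, or_false, Complex.ofReal_eq_zero]
    exact Real.sinh_ne_zero.mpr (mul_ne_zero Real.pi_ne_zero hlam)
  have hprod : Complex.Gamma (Complex.I * lam) * Complex.Gamma (-(Complex.I * lam)) =
      (Complex.normSq (Complex.Gamma (Complex.I * lam)) : ℂ) := by
    rw [← hconj, Complex.mul_conj]
  have e1 := Complex.Gamma_mul_Gamma_one_sub (Complex.I * lam)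
  have hone : (1 : ℂ) - Complex.I * lam = -(Complex.I * lam) + 1 := by ring
  rw [hone, h1, hsin, eq_div_iff hS] at e1
  have key : ((Complex.normSq (Complex.Gamma (Complex.I * lam)) : ℂ)) *
      ((lam : ℂ) * (Real.sinh (π * lam) : ℂ)) = (π : ℂ) := by
    linear_combination e1 - ((lam : ℂ) * (Real.sinh (π * lam) : ℂ)) * hprod +
      (Complex.Gamma (Complex.I * lam) * Complex.Gamma (-(Complex.I * lam)) * (lam : ℂ) *
        (Real.sinh (π * lam) : ℂ)) * (Complex.I_sq)
  exact_mod_cast key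

lemma sin_pi_w (j : ℕ) (lam : ℝ) :
    Complex.sin ((π : ℂ) * ((Complex.I * lam - (2*j+1))/2)) =
      -((-1:ℂ))^j * (Real.cosh (π * lam / 2) : ℂ) := by
  have e : (π : ℂ) * ((Complex.I * lam - (2*j+1))/2) =
      (((π * lam / 2 : ℝ) : ℂ) * Complex.I - (π:ℂ)/2) - (j:ℂ) * π := by
    push_cast; ring
  rw [e, Complex.sin_antiperiodic.sub_nat_mul_eq j]
  have e2 : Complex.sin (((π * lam / 2 : ℝ) : ℂ) * Complex.I - (π:ℂ)/2) =
      -Complex.cos (((π * lam / 2 : ℝ) : ℂ) * Complex.I) := by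
    rw [← Complex.sin_pi_div_two_sub, ← Complex.sin_neg]
    ring_nf
  rw [e2, Complex.cos_mul_I, ← Complex.ofReal_cosh]
  ring

lemma normSq_Gamma_w (j : ℕ) (lam : ℝ) :
    Complex.normSq (Complex.Gamma ((Complex.I * lam - (2*(j:ℂ)+1))/2)) *
      ‖∏ k ∈ Finset.range (2*j+2), ((-(Complex.I * lam) - (2*(j:ℂ)+1))/2 + k)‖ *
      Real.cosh (π * lam / 2) = π := by
  set w : ℂ := (Complex.I * lam - (2*(j:ℂ)+1))/2 with hw
  set cw : ℂ := (-(Complex.I * lam) - (2*(j:ℂ)+1))/2 with hcw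
  have hnz : ∀ k < 2*j+2, cw + (k:ℕ) ≠ 0 := by
    intro k _ h0
    have := congrArg Complex.re h0
    simp [hcw, Complex.div_re] at this
    have h2 : 2*(k:ℝ) = 2*j+1 := by linarith
    have h3 : 2*k = 2*j+1 := by exact_mod_cast h2
    omega
  have hconjw : (starRingEnd ℂ) w = cw := by
    simp [hw, hcw, map_div₀, map_sub, map_mul, Complex.conj_I, Complex.conj_ofReal, map_ofNat]
  have hshift := gamma_shift cw (2*j+2) hnz
  have h1w : cw + ((2*j+2 : ℕ):ℂ) = 1 - w := by
    rw [hcw, hw]; push_cast; ring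
  have e1 := Complex.Gamma_mul_Gamma_one_sub w
  rw [← h1w, hshift] at e1
  have hprod : Complex.Gamma w * Complex.Gamma cw = (Complex.normSq (Complex.Gamma w) : ℂ) := by
    rw [← hconjw, Complex.Gamma_conj, Complex.mul_conj]
  set P : ℂ := ∏ k ∈ Finset.range (2*j+2), (cw + (k:ℕ)) with hP
  have key : (Complex.normSq (Complex.Gamma w) : ℂ) * P =
      (π : ℂ) / Complex.sin ((π:ℂ) * w) := by
    rw [← hprod]; linear_combination e1
  have habs := congrArg (‖·‖) key
  rw [norm_mul, norm_div, sin_pi_w j lam] at habs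
  have h1 : ‖((Complex.normSq (Complex.Gamma w) : ℂ))‖ =
      Complex.normSq (Complex.Gamma w) := by
    rw [Complex.norm_real, Real.norm_eq_abs, _root_.abs_of_nonneg (Complex.normSq_nonneg _)]
  have h2 : ‖(-((-1:ℂ))^j * (Real.cosh (π * lam / 2) : ℂ))‖ =
      Real.cosh (π * lam / 2) := by
    rw [norm_mul, norm_neg, norm_pow, norm_neg, norm_one, one_pow, one_mul,
      Complex.norm_real, Real.norm_eq_abs, _root_.abs_of_nonneg ((Real.cosh_pos (π*lam/2)).le)]
  have h3 : ‖((π:ℂ))‖ = π := by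
    rw [Complex.norm_real, Real.norm_eq_abs, _root_.abs_of_nonneg Real.pi_pos.le]
  rw [h1, h2, h3] at habs
  have hch : Real.cosh (π * lam / 2) ≠ 0 := (Real.cosh_pos (π*lam/2)).ne'
  field_simp at habs
  linarith [habs]

lemma abs_prod_sq (j n : ℕ) (lam : ℝ) (ε : ℝ) (hε : ε = 1 ∨ ε = -1) :
    (‖∏ k ∈ Finset.range n, ((Complex.I*(ε*lam) - (2*(j:ℂ)+1))/2 + k)‖)^2
      = ∏ k ∈ Finset.range n, ((2*(k:ℝ) - (2*(j:ℝ)+1))^2 + lam^2)/4 := by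
  rw [Complex.sq_norm, map_prod]
  apply Finset.prod_congr rfl
  intro k _
  rw [Complex.normSq_apply]
  have hε2 : ε^2 = 1 := by rcases hε with h|h <;> rw [h] <;> norm_num
  simp [Complex.div_re, Complex.div_im]
  ring_nf
  nlinarith [hε2]

lemma prod_lower (j n : ℕ) (lam : ℝ) :
    ((1+lam^2)/4)^n ≤ ∏ k ∈ Finset.range n, ((2*(k:ℝ) - (2*(j:ℝ)+1))^2 + lam^2)/4 := by
  rw [show (((1+lam^2)/4)^n : ℝ) = ∏ _k ∈ Finset.range n, ((1+lam^2)/4) by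
    rw [Finset.prod_const, Finset.card_range]]
  apply Finset.prod_le_prod
  · intro k _; positivity
  · intro k _
    have h1 : (1:ℝ) ≤ (2*(k:ℝ) - (2*(j:ℝ)+1))^2 := by
      rcases le_or_gt k j with h | h
      · have : (k:ℝ) ≤ j := by exact_mod_cast h
        nlinarith
      · have : (j:ℝ) + 1 ≤ k := by exact_mod_cast h
        nlinarith
    nlinarith [sq_nonneg lam]

lemma prod_upper (j n : ℕ) (lam : ℝ) :
    ∏ k ∈ Finset.range n, ((2*(k:ℝ) - (2*(j:ℝ)+1))^2 + lam^2)/4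
      ≤ ((2*(n:ℝ)+2*(j:ℝ)+1)^2 * (1+lam^2))^n := by
  rw [show (((2*(n:ℝ)+2*(j:ℝ)+1)^2 * (1+lam^2))^n : ℝ)
      = ∏ _k ∈ Finset.range n, ((2*(n:ℝ)+2*(j:ℝ)+1)^2 * (1+lam^2)) by
    rw [Finset.prod_const, Finset.card_range]]
  apply Finset.prod_le_prod
  · intro k _; positivity
  · intro k hk
    have hkn : (k:ℝ) ≤ n := by
      have := Finset.mem_range.mp hk; exact_mod_cast this.le
    have hj0 : (0:ℝ) ≤ (j:ℝ) := Nat.cast_nonneg j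
    have hk0 : (0:ℝ) ≤ (k:ℝ) := Nat.cast_nonneg k
    have hn0 : (0:ℝ) ≤ (n:ℝ) := Nat.cast_nonneg n
    have hB : (1:ℝ) ≤ (2*(n:ℝ)+2*(j:ℝ)+1)^2 := by nlinarith
    have h1 : (2*(k:ℝ) - (2*(j:ℝ)+1))^2 ≤ (2*(n:ℝ)+2*(j:ℝ)+1)^2 := by
      nlinarith [mul_nonneg (show (0:ℝ) ≤ 2*(n:ℝ)+4*(j:ℝ)+2-2*(k:ℝ) by linarith)
        (show (0:ℝ) ≤ 2*(n:ℝ)+2*(k:ℝ) by linarith)]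
    nlinarith [h1, hB, mul_le_mul_of_nonneg_right hB (sq_nonneg lam), sq_nonneg lam]

lemma main_id (ρ ν j : ℕ) (hρ : 3 ≤ ρ) (hj : ν + 2 = ρ + (2*j+1)) (lam : ℝ) (hlam : lam ≠ 0) :
    ‖(lam:ℂ) * cfun ρ ν lam‖^2 *
        (Real.sinh (π*lam) * ∏ k ∈ Finset.range (ν+1), ((2*(k:ℝ) - (2*(j:ℝ)+1))^2 + lam^2)/4) * π
      = (4:ℝ)^ρ * ((Nat.factorial (ρ-2) : ℝ))^2 * (lam * Real.cosh (π*lam/2)^2) *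
        ∏ k ∈ Finset.range (2*j+2), ((2*(k:ℝ) - (2*(j:ℝ)+1))^2 + lam^2)/4 := by
  have hjC : ((ν:ℂ)+2) = (ρ:ℂ) + (2*(j:ℂ)+1) := by exact_mod_cast hj
  set w : ℂ := (Complex.I * lam - (2*(j:ℂ)+1))/2 with hw
  set cw : ℂ := (-(Complex.I * lam) - (2*(j:ℂ)+1))/2 with hcw
  have harg1 : ((Complex.I * lam + ρ - ν - 2)/2 : ℂ) = w := by
    rw [hw]; linear_combination (-1/2 : ℂ) * hjC
  have harg2 : ((Complex.I * lam + ρ + ν)/2 : ℂ) = w + ((ν+1 : ℕ):ℂ) := by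
    rw [hw]; push_cast; linear_combination (-1/2 : ℂ) * hjC
  have hnzQ : ∀ k < ν+1, w + (k:ℕ) ≠ 0 := by
    intro k _ h0
    have := congrArg Complex.re h0
    simp [hw, Complex.div_re] at this
    have h2 : 2*(k:ℝ) = 2*j+1 := by linarith
    have h3 : 2*k = 2*j+1 := by exact_mod_cast h2
    omega
  have hQ := gamma_shift w (ν+1) hnzQ
  set Q : ℂ := ∏ k ∈ Finset.range (ν+1), (w + (k:ℕ)) with hQdef
  set P : ℂ := ∏ k ∈ Finset.range (2*j+2), (cw + (k:ℕ)) with hPdef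
  -- numeric pieces
  have hA : Complex.normSq (2 ^ ((ρ : ℂ) - Complex.I * lam)) = (4:ℝ)^ρ := by
    rw [← Complex.sq_norm]
    rw [show ((2:ℂ)) = ((2:ℝ):ℂ) by norm_num,
      Complex.norm_cpow_eq_rpow_re_of_pos (by norm_num : (0:ℝ) < 2)]
    have hre : ((ρ : ℂ) - Complex.I * lam).re = (ρ:ℝ) := by simp
    rw [hre, show ((ρ:ℝ)) = ((ρ:ℕ):ℝ) from rfl, Real.rpow_natCast]
    rw [← pow_mul, show (4:ℝ) = 2^2 by norm_num, ← pow_mul]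
    ring_nf
  have hF : Complex.normSq (Complex.Gamma ((ρ : ℂ) - 1)) = ((Nat.factorial (ρ-2) : ℝ))^2 := by
    have hp : ρ = (ρ-2)+2 := by omega
    have harg : ((ρ:ℂ) - 1) = ((ρ-2 : ℕ):ℂ) + 1 := by
      rw [hp]; push_cast; ring
    rw [harg, Complex.Gamma_nat_eq_factorial,
      show ((Nat.factorial (ρ-2) : ℕ):ℂ) = ((Nat.factorial (ρ-2) : ℝ):ℂ) by push_cast; ring,
      Complex.normSq_ofReal]
    ring
  -- product squares
  have hAQsq : (‖Q‖)^2
      = ∏ k ∈ Finset.range (ν+1), ((2*(k:ℝ) - (2*(j:ℝ)+1))^2 + lam^2)/4 := by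
    have e : Q = ∏ k ∈ Finset.range (ν+1), ((Complex.I*((1:ℝ)*lam) - (2*(j:ℂ)+1))/2 + k) := by
      apply Finset.prod_congr rfl; intro k _; rw [hw]; push_cast; ring
    rw [e]; exact abs_prod_sq j (ν+1) lam 1 (Or.inl rfl)
  have hAPsq : (‖P‖)^2
      = ∏ k ∈ Finset.range (2*j+2), ((2*(k:ℝ) - (2*(j:ℝ)+1))^2 + lam^2)/4 := by
    have e : P = ∏ k ∈ Finset.range (2*j+2), ((Complex.I*((-1:ℝ)*lam) - (2*(j:ℂ)+1))/2 + k) := by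
      apply Finset.prod_congr rfl; intro k _; rw [hcw]; push_cast; ring
    rw [e]; exact abs_prod_sq j (2*j+2) lam (-1) (Or.inr rfl)
  have hNW := normSq_Gamma_w j lam
  rw [← hw, ← hcw, ← hPdef] at hNW
  have hN2 := normSq_Gamma_I lam hlam
  -- positivity / nonvanishing
  have hr : (0:ℝ) < 1 + lam^2 := by positivity
  have hQpos : (0:ℝ) < ∏ k ∈ Finset.range (ν+1), ((2*(k:ℝ) - (2*(j:ℝ)+1))^2 + lam^2)/4 :=
    lt_of_lt_of_le (by positivity) (prod_lower j (ν+1) lam)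
  have hPpos : (0:ℝ) < ∏ k ∈ Finset.range (2*j+2), ((2*(k:ℝ) - (2*(j:ℝ)+1))^2 + lam^2)/4 :=
    lt_of_lt_of_le (by positivity) (prod_lower j (2*j+2) lam)
  have hAQ : ‖Q‖ ≠ 0 := by
    have h2 : (0:ℝ) < (‖Q‖)^2 := by rw [hAQsq]; exact hQpos
    intro h0; rw [h0] at h2; norm_num at h2
  have hAP : ‖P‖ ≠ 0 := by
    have h2 : (0:ℝ) < (‖P‖)^2 := by rw [hAPsq]; exact hPpos
    intro h0; rw [h0] at h2; norm_num at h2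
  have hcosh : (0:ℝ) < Real.cosh (π*lam/2) := Real.cosh_pos _
  have hNWpos : (0:ℝ) < Complex.normSq (Complex.Gamma w) := by
    rcases lt_or_eq_of_le (Complex.normSq_nonneg (Complex.Gamma w)) with h | h
    · exact h
    · exfalso; rw [← h, zero_mul, zero_mul] at hNW; exact Real.pi_ne_zero hNW.symm
  have hsinh : Real.sinh (π*lam) ≠ 0 :=
    Real.sinh_ne_zero.mpr (mul_ne_zero Real.pi_ne_zero hlam)
  -- expand the norm
  have hsplit : ‖(lam:ℂ) * cfun ρ ν lam‖^2 =
      lam^2 * ((4:ℝ)^ρ * ((Nat.factorial (ρ-2) : ℝ))^2 * Complex.normSq (Complex.Gamma (Complex.I * lam))) /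
      ((‖Q‖)^2 * Complex.normSq (Complex.Gamma w) * Complex.normSq (Complex.Gamma w)) := by
    rw [Complex.sq_norm, cfun, harg1, harg2, hQ]
    simp only [map_mul, map_div₀]
    rw [hA, hF, Complex.normSq_ofReal, ← Complex.sq_norm Q]
    ring
  have hD : (‖Q‖)^2 * Complex.normSq (Complex.Gamma w) * Complex.normSq (Complex.Gamma w) ≠ 0 := by
    positivity
  rw [hsplit, ← hAQsq, ← hAPsq, div_mul_eq_mul_div, div_mul_eq_mul_div, div_eq_iff hD]
  linear_combination ((4:ℝ)^ρ * ((Nat.factorial (ρ-2) : ℝ))^2 * lam * (‖Q‖)^2 * π) * hN2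
    - ((4:ℝ)^ρ * ((Nat.factorial (ρ-2) : ℝ))^2 * lam * (‖Q‖)^2 *
        (Complex.normSq (Complex.Gamma w) * ‖P‖ * Real.cosh (π*lam/2) + π)) * hNW

lemma coth_pos (lam : ℝ) (h : 0 < lam) :
    Real.sqrt (1+lam^2)/9 ≤ lam * Real.cosh (π*lam/2)^2 / Real.sinh (π*lam) ∧
      lam * Real.cosh (π*lam/2)^2 / Real.sinh (π*lam) ≤ 4 * Real.sqrt (1+lam^2) := by
  set x : ℝ := π*lam/2 with hxdef
  have hx : 0 < x := by positivity
  set S := Real.sinh x with hSdef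
  set C := Real.cosh x with hCdef
  have hS : 0 < S := Real.sinh_pos_iff.mpr hx
  have hC : 0 < C := Real.cosh_pos x
  have hsinh2 : Real.sinh (π*lam) = 2 * S * C := by
    have e : π*lam = 2*x := by rw [hxdef]; ring
    rw [e, Real.sinh_two_mul]
  have hCS : C - S = Real.exp (-x) := Real.cosh_sub_sinh x
  have hxS : x < S := Real.self_lt_sinh_iff.mpr hx
  have hexp1 : Real.exp (-x) ≤ 1 := by
    rw [Real.exp_le_one_iff]; linarith
  have hSC : S < C := by
    have := Real.exp_pos (-x); linarith
  have ha : S ≤ 2*x*C := by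
    have e2 : 1 - 2*x ≤ Real.exp (-(2*x)) := by
      have := Real.add_one_le_exp (-(2*x)); linarith
    have e3 : Real.exp (-(2*x)) * Real.exp x = Real.exp (-x) := by
      rw [← Real.exp_add]; ring_nf
    have e4 : S = (Real.exp x - Real.exp (-x))/2 := Real.sinh_eq x
    have e5 : Real.exp x ≤ 2*C := by
      have := Real.sinh_add_cosh x; linarith
    have hex : 0 < Real.exp x := Real.exp_pos x
    nlinarith [mul_le_mul_of_nonneg_right e2 hex.le]
  have hc : x*C ≤ (1+x)*S := by nlinarith [hxS, hexp1, hCS, hx]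
  have hr : (0:ℝ) < 1 + lam^2 := by positivity
  have hs2 : Real.sqrt (1+lam^2) ≤ 1+lam := by
    have e : (1:ℝ)+lam^2 ≤ (1+lam)^2 := by nlinarith
    calc Real.sqrt (1+lam^2) ≤ Real.sqrt ((1+lam)^2) := Real.sqrt_le_sqrt e
    _ = 1+lam := Real.sqrt_sq (by linarith)
  have hsqnn : 0 ≤ Real.sqrt (1+lam^2) := Real.sqrt_nonneg _
  have hsq : Real.sqrt (1+lam^2)^2 = 1+lam^2 := Real.sq_sqrt hr.le
  have hs1 : 1+lam ≤ 2*Real.sqrt (1+lam^2) := by nlinarith [hsq, hsqnn, sq_nonneg (lam-1), h]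
  have hπ : π < 3.15 := Real.pi_lt_d2
  have hπ3 : 3 < π := Real.pi_gt_three
  rw [hsinh2]
  constructor
  · rw [div_le_div_iff₀ (by norm_num) (by positivity)]
    have t1 : S*C ≤ (2*x*C)*C := mul_le_mul_of_nonneg_right ha hC.le
    have t3 : Real.sqrt (1+lam^2)*(2*S*C) ≤ (1+lam)*(2*S*C) :=
      mul_le_mul_of_nonneg_right hs2 (by positivity)
    nlinarith [mul_pos h (mul_pos hC hC), mul_pos hS hC, mul_pos (mul_pos hS hC) h]
  · rw [div_le_iff₀ (by positivity)]
    have t1 : (x*C)*C ≤ ((1+x)*S)*C := mul_le_mul_of_nonneg_right hc hC.le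
    have t2 : (1+lam)*(S*C) ≤ (2*Real.sqrt (1+lam^2))*(S*C) :=
      mul_le_mul_of_nonneg_right hs1 (by positivity)
    nlinarith [mul_pos hS hC, mul_pos (mul_pos hS hC) h, hsqnn]

lemma coth_bounds (lam : ℝ) (h : lam ≠ 0) :
    Real.sqrt (1+lam^2)/9 ≤ lam * Real.cosh (π*lam/2)^2 / Real.sinh (π*lam) ∧
      lam * Real.cosh (π*lam/2)^2 / Real.sinh (π*lam) ≤ 4 * Real.sqrt (1+lam^2) := by
  rcases h.lt_or_gt with h | h
  · have := coth_pos (-lam) (by linarith)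
    have e1 : (-lam) * Real.cosh (π*(-lam)/2)^2 / Real.sinh (π*(-lam))
        = lam * Real.cosh (π*lam/2)^2 / Real.sinh (π*lam) := by
      rw [show π*(-lam)/2 = -(π*lam/2) by ring, show π*(-lam) = -(π*lam) by ring,
        Real.cosh_neg, Real.sinh_neg]
      field_simp
    have e2 : (1:ℝ) + (-lam)^2 = 1 + lam^2 := by ring
    rw [e1, e2] at this
    exact this
  · exact coth_pos lam h

lemma norm_bounds (ρ ν j : ℕ) (hρ : 3 ≤ ρ) (hj : ν + 2 = ρ + (2*j+1)) :
    ∃ K1 K2 : ℝ, 0 < K1 ∧ 0 < K2 ∧ ∀ lam : ℝ, lam ≠ 0 →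
      K1 * (1+lam^2) ^ (((5:ℝ)-2*(ρ:ℝ))/4) ≤ ‖(lam:ℂ) * cfun ρ ν lam‖ ∧
      ‖(lam:ℂ) * cfun ρ ν lam‖ ≤ K2 * (1+lam^2) ^ (((5:ℝ)-2*(ρ:ℝ))/4) := by
  set p := 2*j+2 with hp
  set q := ν+1 with hq
  set BP := (2*(p:ℝ)+2*(j:ℝ)+1)^2 with hBP
  set BQ := (2*(q:ℝ)+2*(j:ℝ)+1)^2 with hBQ
  have hBPpos : 0 < BP := by rw [hBP]; positivity
  have hBQpos : 0 < BQ := by rw [hBQ]; positivity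
  set c0 := (4:ℝ)^ρ * ((Nat.factorial (ρ-2) : ℝ))^2 with hc0
  have hc0pos : 0 < c0 := by
    rw [hc0]
    have := Nat.factorial_pos (ρ-2)
    positivity
  set K1sq := c0/(9*4^p*BQ^q*π) with hK1sq
  set K2sq := c0*4*BP^p*4^q/π with hK2sq
  have hK1pos : 0 < K1sq := by rw [hK1sq]; positivity
  have hK2pos : 0 < K2sq := by rw [hK2sq]; positivity
  refine ⟨Real.sqrt K1sq, Real.sqrt K2sq, Real.sqrt_pos.mpr hK1pos, Real.sqrt_pos.mpr hK2pos, ?_⟩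
  intro lam hlam
  have hr : (0:ℝ) < 1 + lam^2 := by positivity
  have hsinh : Real.sinh (π*lam) ≠ 0 :=
    Real.sinh_ne_zero.mpr (mul_ne_zero Real.pi_ne_zero hlam)
  set r := 1 + lam^2 with hrdef
  set T := lam * Real.cosh (π*lam/2)^2 / Real.sinh (π*lam) with hT
  set Pp := ∏ k ∈ Finset.range p, ((2*(k:ℝ) - (2*(j:ℝ)+1))^2 + lam^2)/4 with hPp
  set Qp := ∏ k ∈ Finset.range q, ((2*(k:ℝ) - (2*(j:ℝ)+1))^2 + lam^2)/4 with hQp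
  have hPpos : 0 < Pp := lt_of_lt_of_le (by positivity) (prod_lower j p lam)
  have hQpos : 0 < Qp := lt_of_lt_of_le (by positivity) (prod_lower j q lam)
  have hmain := main_id ρ ν j hρ hj lam hlam
  rw [← hPp, ← hQp] at hmain
  have hTs : T * Real.sinh (π*lam) = lam * Real.cosh (π*lam/2)^2 :=
    div_mul_cancel₀ _ hsinh
  have key : ‖(lam:ℂ) * cfun ρ ν lam‖^2 * Qp * π = c0 * T * Pp := by
    apply mul_right_cancel₀ hsinh
    rw [hc0]
    linear_combination hmain - ((4:ℝ)^ρ * ((Nat.factorial (ρ-2) : ℝ))^2 * Pp) * hTs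
  have hNsq : ‖(lam:ℂ) * cfun ρ ν lam‖^2 = c0 * T * Pp / (Qp * π) := by
    rw [eq_div_iff (by positivity)]
    linear_combination key
  have hTb := coth_bounds lam hlam
  rw [← hrdef, ← hT] at hTb
  have hPl := prod_lower j p lam
  have hPu := prod_upper j p lam
  have hQl := prod_lower j q lam
  have hQu := prod_upper j q lam
  rw [← hPp, ← hrdef] at hPl hPu
  rw [← hQp, ← hrdef] at hQl hQu
  rw [← hBP] at hPu
  rw [← hBQ] at hQu
  have hsq : 0 ≤ Real.sqrt r := Real.sqrt_nonneg r
  -- exponent identity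
  have hexp : Real.sqrt r * r^(p:ℕ) / r^(q:ℕ) = r ^ (((5:ℝ)-2*(ρ:ℝ))/2) := by
    have hjR : (ν:ℝ) + 2 = (ρ:ℝ) + (2*(j:ℝ)+1) := by exact_mod_cast hj
    rw [Real.sqrt_eq_rpow, ← Real.rpow_natCast r p, ← Real.rpow_natCast r q,
      ← Real.rpow_add hr, ← Real.rpow_sub hr]
    congr 1
    rw [hp, hq]
    push_cast
    linarith
  -- squared bounds
  have hup : ‖(lam:ℂ) * cfun ρ ν lam‖^2 ≤ K2sq * r ^ (((5:ℝ)-2*(ρ:ℝ))/2) := by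
    rw [hNsq]
    have h1 : c0 * T * Pp ≤ c0 * (4 * Real.sqrt r) * ((BP*r)^p) := by
      have := mul_le_mul (mul_le_mul_of_nonneg_left hTb.2 hc0pos.le) hPu hPpos.le
        (by positivity)
      exact this
    have h2 : ((r/4)^q * π : ℝ) ≤ Qp * π :=
      mul_le_mul_of_nonneg_right hQl Real.pi_pos.le
    have h3 : c0 * T * Pp / (Qp * π) ≤ c0 * (4 * Real.sqrt r) * ((BP*r)^p) / ((r/4)^q * π) :=
      div_le_div₀ (by positivity) h1 (by positivity) h2
    refine h3.trans (le_of_eq ?_)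
    rw [← hexp, hK2sq, mul_pow BP r p, div_pow r 4 q]
    field_simp
  have hTnn : (0:ℝ) ≤ T := le_trans (by positivity) hTb.1
  have hlow : K1sq * r ^ (((5:ℝ)-2*(ρ:ℝ))/2) ≤ ‖(lam:ℂ) * cfun ρ ν lam‖^2 := by
    rw [hNsq]
    have h1 : c0 * (Real.sqrt r / 9) * ((r/4)^p) ≤ c0 * T * Pp := by
      have := mul_le_mul (mul_le_mul_of_nonneg_left hTb.1 hc0pos.le) hPl (by positivity)
        (mul_nonneg hc0pos.le hTnn)
      exact this
    have h2 : (Qp * π : ℝ) ≤ (BQ*r)^q * π :=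
      mul_le_mul_of_nonneg_right hQu Real.pi_pos.le
    have h3 : c0 * (Real.sqrt r / 9) * ((r/4)^p) / ((BQ*r)^q * π) ≤ c0 * T * Pp / (Qp * π) :=
      div_le_div₀ (mul_nonneg (mul_nonneg hc0pos.le hTnn) hPpos.le) h1 (by positivity) h2
    refine le_trans (le_of_eq ?_) h3
    rw [← hexp, hK1sq, mul_pow BQ r q, div_pow r 4 p]
    field_simp
  -- take square roots
  have hnorm_eq : ‖(lam:ℂ) * cfun ρ ν lam‖ = Real.sqrt (‖(lam:ℂ) * cfun ρ ν lam‖^2) :=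
    (Real.sqrt_sq (norm_nonneg _)).symm
  have hre : Real.sqrt (r ^ (((5:ℝ)-2*(ρ:ℝ))/2)) = r ^ (((5:ℝ)-2*(ρ:ℝ))/4) := by
    rw [Real.sqrt_eq_rpow, ← Real.rpow_mul hr.le]
    congr 1
    ring
  constructor
  · rw [hnorm_eq, ← hre, ← Real.sqrt_mul hK1pos.le]
    exact Real.sqrt_le_sqrt hlow
  · rw [hnorm_eq, ← hre, ← Real.sqrt_mul hK2pos.le]
    exact Real.sqrt_le_sqrt hup

/-- For `ν > ρ-2` with `(ν-ρ+2)/2` not a nonnegative integer, there is `C > 0` with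
`C⁻¹(1+λ²)^((2ρ-5)/4) ≤ |λ c_ν(λ)|⁻¹ ≤ C (1+λ²)^((2ρ-5)/4)` for all real `λ`
(the function `b(λ) = λ c_ν(λ)` being given at `λ = 0` by its limiting value). -/
theorem stmt7 (ρ ν : ℕ) (hρ : 3 ≤ ρ) (hν : ρ - 2 < ν)
    (hodd : ¬ Even (ν + 2 - ρ)) (b : ℝ → ℂ)
    (hb : ∀ lam : ℝ, lam ≠ 0 → b lam = lam * cfun ρ ν lam)
    (hb0 : Tendsto (fun lam : ℝ => (lam : ℂ) * cfun ρ ν lam)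
      (nhdsWithin 0 {0}ᶜ) (nhds (b 0))) :
    ∃ C > (0:ℝ), ∀ lam : ℝ,
      C⁻¹ * (1 + lam ^ 2) ^ ((2 * (ρ:ℝ) - 5) / 4) ≤ ‖b lam‖⁻¹ ∧
        ‖b lam‖⁻¹ ≤ C * (1 + lam ^ 2) ^ ((2 * (ρ:ℝ) - 5) / 4) := by
  obtain ⟨j, hj⟩ : ∃ j, ν + 2 = ρ + (2*j+1) := by
    rcases Nat.even_or_odd (ν+2-ρ) with h | h
    · exact absurd h hodd
    · obtain ⟨j, hjj⟩ := h; exact ⟨j, by omega⟩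
  obtain ⟨K1, K2, hK1, hK2, hbnd⟩ := norm_bounds ρ ν j hρ hj
  set e' := ((5:ℝ)-2*(ρ:ℝ))/4 with he'
  have hcont : Tendsto (fun lam : ℝ => (1+lam^2) ^ e') (nhdsWithin (0:ℝ) {0}ᶜ) (nhds 1) := by
    have h1 : ContinuousAt (fun lam : ℝ => (1+lam^2) ^ e') 0 := by
      apply ContinuousAt.rpow_const
      · fun_prop
      · left; norm_num
    have h2 : ((1:ℝ)+(0:ℝ)^2) ^ e' = 1 := by norm_num
    have h3 : Tendsto (fun lam : ℝ => (1+lam^2) ^ e') (nhdsWithin (0:ℝ) {0}ᶜ)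
        (nhds (((1:ℝ)+(0:ℝ)^2) ^ e')) :=
      h1.tendsto.mono_left (nhdsWithin_le_nhds (s := {0}ᶜ))
    rw [h2] at h3
    exact h3
  have htn : Tendsto (fun lam : ℝ => ‖(lam:ℂ) * cfun ρ ν lam‖)
      (nhdsWithin (0:ℝ) {0}ᶜ) (nhds ‖b 0‖) := hb0.norm
  have hzero : K1 ≤ ‖b 0‖ ∧ ‖b 0‖ ≤ K2 := by
    constructor
    · have hlim : Tendsto (fun lam : ℝ => K1 * (1+lam^2) ^ e')
          (nhdsWithin (0:ℝ) {0}ᶜ) (nhds K1) := by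
        simpa using hcont.const_mul K1
      refine le_of_tendsto_of_tendsto hlim htn ?_
      filter_upwards [self_mem_nhdsWithin] with x hx
      exact (hbnd x (Set.mem_compl_singleton_iff.mp hx)).1
    · have hlim : Tendsto (fun lam : ℝ => K2 * (1+lam^2) ^ e')
          (nhdsWithin (0:ℝ) {0}ᶜ) (nhds K2) := by
        simpa using hcont.const_mul K2
      refine le_of_tendsto_of_tendsto htn hlim ?_
      filter_upwards [self_mem_nhdsWithin] with x hx
      exact (hbnd x (Set.mem_compl_singleton_iff.mp hx)).2
  set C := max K1⁻¹ K2 with hC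
  have hCpos : (0:ℝ) < C := lt_of_lt_of_le (inv_pos.mpr hK1) (le_max_left _ _)
  refine ⟨C, hCpos, ?_⟩
  intro lam
  have hrpos : (0:ℝ) < 1+lam^2 := by positivity
  have hse : (0:ℝ) < (1+lam^2) ^ e' := Real.rpow_pos_of_pos hrpos _
  have hre : (1+lam^2) ^ ((2*(ρ:ℝ)-5)/4) = ((1+lam^2) ^ e')⁻¹ := by
    rw [← Real.rpow_neg hrpos.le]
    congr 1
    rw [he']; ring
  have hBL : K1 * (1+lam^2)^e' ≤ ‖b lam‖ ∧ ‖b lam‖ ≤ K2 * (1+lam^2)^e' := by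
    rcases eq_or_ne lam 0 with rfl | hlam
    · have h1 : ((1:ℝ)+(0:ℝ)^2) ^ e' = 1 := by norm_num
      rw [h1]
      simpa using hzero
    · rw [hb lam hlam]; exact hbnd lam hlam
  have hbpos : (0:ℝ) < ‖b lam‖ :=
    lt_of_lt_of_le (by positivity) hBL.1
  constructor
  · rw [hre]
    have h2 : ‖b lam‖ ≤ C * ((1+lam^2)^e') :=
      hBL.2.trans (mul_le_mul_of_nonneg_right (le_max_right _ _) hse.le)
    calc C⁻¹ * ((1+lam^2)^e')⁻¹ = (C * ((1+lam^2)^e'))⁻¹ := by rw [mul_inv]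
    _ ≤ ‖b lam‖⁻¹ := inv_anti₀ hbpos h2
  · rw [hre]
    have h1 : ‖b lam‖⁻¹ ≤ (K1 * ((1+lam^2)^e'))⁻¹ :=
      inv_anti₀ (by positivity) hBL.1
    calc ‖b lam‖⁻¹ ≤ (K1 * ((1+lam^2)^e'))⁻¹ := h1
    _ = K1⁻¹ * ((1+lam^2)^e')⁻¹ := by rw [mul_inv]
    _ ≤ C * ((1+lam^2)^e')⁻¹ :=
      mul_le_mul_of_nonneg_right (le_max_left _ _) (by positivity)
end

section
/- For g ∈ Sp(n,1), k ∈ K = Sp(n)×Sp(1), and t ≥ 0, one has 0 ≤ A⁺(g⁻¹ k exp(tH)) - H(g⁻¹ k exp(tH)) ≤ ((1+|g·0|)/(1-|g·0|)) e^{-2t}, where |g·0| < 1 is the norm of the image of the origin under the fractional linear action of g on the unit ball in ℍⁿ. -/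
open Matrix

noncomputable section

/-- The quadratic form matrix `J = diag(1,…,1,-1)` over the quaternions. -/
def Jm (n : ℕ) : Matrix (Fin (n+1)) (Fin (n+1)) (Quaternion ℝ) :=
  Matrix.diagonal fun i => if i = Fin.last n then (-1 : Quaternion ℝ) else 1

/-- The group `Sp(n,1)` of quaternionic matrices preserving `Σ|u_j|² - |u_{n+1}|²`. -/
def SpGrp (n : ℕ) : Set (Matrix (Fin (n+1)) (Fin (n+1)) (Quaternion ℝ)) :=
  {g | gᴴ * Jm n * g = Jm n}

/-- The maximal compact subgroup `K = Sp(n) × Sp(1)`: block diagonal elements. -/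
def inK (n : ℕ) (k : Matrix (Fin (n+1)) (Fin (n+1)) (Quaternion ℝ)) : Prop :=
  k ∈ SpGrp n ∧ ∀ i : Fin (n+1), i ≠ Fin.last n →
    k i (Fin.last n) = 0 ∧ k (Fin.last n) i = 0

/-- The Cartan subgroup element `a_t = exp(tH)`. -/
def atm (n : ℕ) (t : ℝ) : Matrix (Fin (n+1)) (Fin (n+1)) (Quaternion ℝ) :=
  Matrix.of fun i j =>
    if (i = 0 ∧ j = 0) ∨ (i = Fin.last n ∧ j = Fin.last n) then
      algebraMap ℝ (Quaternion ℝ) (Real.cosh t)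
    else if (i = 0 ∧ j = Fin.last n) ∨ (i = Fin.last n ∧ j = 0) then
      algebraMap ℝ (Quaternion ℝ) (Real.sinh t)
    else if i = j then 1 else 0

/-- The null vector `v₊ = (e₁, 1)ᵗ`, fixed by the Iwasawa nilpotent group `N`. -/
def vplus (n : ℕ) : Fin (n+1) → Quaternion ℝ :=
  fun i => if i = 0 ∨ i = Fin.last n then 1 else 0

/-- The Cartan radial component `A⁺(g) = arcosh |d|`, where `d` is the bottom-right
entry of `g` (so `cosh A⁺(g) = |d|`). -/
def Aplus (n : ℕ) (g : Matrix (Fin (n+1)) (Fin (n+1)) (Quaternion ℝ)) : ℝ :=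
  Real.log (‖g (Fin.last n) (Fin.last n)‖ +
    Real.sqrt (‖g (Fin.last n) (Fin.last n)‖ ^ 2 - 1))

/-- The Iwasawa component `H(g) = log |c e₁ + d|`. -/
def Hiw (n : ℕ) (g : Matrix (Fin (n+1)) (Fin (n+1)) (Quaternion ℝ)) : ℝ :=
  Real.log ‖g (Fin.last n) 0 + g (Fin.last n) (Fin.last n)‖

/-- The norm `|g·0|` of the image of the origin of the unit ball `B(ℍⁿ)` under the
fractional linear action of `g = [[a,b],[c,d]]`, namely `g·0 = b d⁻¹`. -/
def normg0 (n : ℕ) (g : Matrix (Fin (n+1)) (Fin (n+1)) (Quaternion ℝ)) : ℝ :=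
  Real.sqrt (∑ i : Fin n,
    ‖g (Fin.castSucc i) (Fin.last n) * (g (Fin.last n) (Fin.last n))⁻¹‖ ^ 2)

open Quaternion

lemma coeSum {n : ℕ} (f : Fin n → ℝ) :
    ∑ i, ((f i : ℝ) : Quaternion ℝ) = ((∑ i, f i : ℝ) : Quaternion ℝ) := by
  simp [← Quaternion.algebraMap_def, map_sum]

lemma spEntry {n : ℕ} {g : Matrix (Fin (n+1)) (Fin (n+1)) (Quaternion ℝ)}
    (hg : g ∈ SpGrp n) (p q : Fin (n+1)) :
    ∑ j, (star (g j p) * (if j = Fin.last n then (-1 : Quaternion ℝ) else 1)) * g j q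
      = if p = q then (if p = Fin.last n then -1 else 1) else 0 := by
  have hg' : gᴴ * Jm n * g = Jm n := hg
  have := congrFun (congrFun hg' p) q
  rw [Matrix.mul_apply] at this
  simp only [Jm, Matrix.mul_diagonal, Matrix.conjTranspose_apply, Matrix.diagonal_apply] at this
  convert this using 2

lemma colNormSq {n : ℕ} {g : Matrix (Fin (n+1)) (Fin (n+1)) (Quaternion ℝ)}
    (hg : g ∈ SpGrp n) (p : Fin (n+1)) :
    ∑ i : Fin n, ‖g (Fin.castSucc i) p‖^2 - ‖g (Fin.last n) p‖^2
      = if p = Fin.last n then -1 else 1 := by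
  have h := spEntry hg p p
  rw [Fin.sum_univ_castSucc] at h
  have hcs : ∀ i : Fin n, (Fin.castSucc i : Fin (n+1)) ≠ Fin.last n :=
    fun i => (Fin.castSucc_lt_last i).ne
  simp only [hcs, if_neg, if_true, if_false, mul_one, mul_neg_one, neg_mul,
    Quaternion.star_mul_self, ite_true, ite_false, if_pos rfl] at h
  apply Quaternion.coe_injective
  have hns : ∀ (a : Quaternion ℝ), ((‖a‖^2 : ℝ) : Quaternion ℝ) = ↑(normSq a) := by
    intro a; rw [Quaternion.normSq_eq_norm_mul_self, sq]
  simp only [← hns] at h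
  rw [coeSum] at h
  rw [show ((∑ i : Fin n, ‖g (Fin.castSucc i) p‖^2 - ‖g (Fin.last n) p‖^2 : ℝ) : Quaternion ℝ)
      = ↑(∑ i : Fin n, ‖g (Fin.castSucc i) p‖^2) + -(↑(‖g (Fin.last n) p‖^2 : ℝ) : Quaternion ℝ) by
    rw [sub_eq_add_neg]; push_cast; ring_nf]
  rw [h]
  split_ifs <;> simp
lemma two_term_sum {n : ℕ} (h0N : (0 : Fin (n+1)) ≠ Fin.last n)
    (f : Fin (n+1) → Quaternion ℝ) (a b : Fin (n+1)) (hab : a ≠ b) (c s : Quaternion ℝ) :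
    ∑ p, f p * (if p = a then c else if p = b then s else 0) = f a * c + f b * s := by
  have : ∀ p : Fin (n+1), f p * (if p = a then c else if p = b then s else 0)
      = (if p = a then f p * c else 0) + (if p = b then f p * s else 0) := by
    intro p
    split_ifs with h1 h2 <;> simp_all
  rw [Finset.sum_congr rfl fun p _ => this p, Finset.sum_add_distrib,
    Finset.sum_ite_eq' Finset.univ, Finset.sum_ite_eq' Finset.univ]
  simp

set_option maxHeartbeats 1000000 in
lemma G_entries (n : ℕ) (hn : 1 ≤ n) (g k : Matrix (Fin (n+1)) (Fin (n+1)) (Quaternion ℝ))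
    (hkblk : ∀ i : Fin (n+1), i ≠ Fin.last n → k i (Fin.last n) = 0 ∧ k (Fin.last n) i = 0)
    (t : ℝ) :
    (Jm n * gᴴ * Jm n * k * atm n t) (Fin.last n) 0
      = -(∑ i : Fin n, star (g (Fin.castSucc i) (Fin.last n)) * k (Fin.castSucc i) 0)
          * ((Real.cosh t : ℝ) : Quaternion ℝ)
        + (star (g (Fin.last n) (Fin.last n)) * k (Fin.last n) (Fin.last n))
          * ((Real.sinh t : ℝ) : Quaternion ℝ)
    ∧ (Jm n * gᴴ * Jm n * k * atm n t) (Fin.last n) (Fin.last n)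
      = -(∑ i : Fin n, star (g (Fin.castSucc i) (Fin.last n)) * k (Fin.castSucc i) 0)
          * ((Real.sinh t : ℝ) : Quaternion ℝ)
        + (star (g (Fin.last n) (Fin.last n)) * k (Fin.last n) (Fin.last n))
          * ((Real.cosh t : ℝ) : Quaternion ℝ) := by
  have h0N : (0 : Fin (n+1)) ≠ Fin.last n := by
    simp [Fin.ext_iff, Fin.last]; omega
  have hcs : ∀ i : Fin n, (Fin.castSucc i : Fin (n+1)) ≠ Fin.last n :=
    fun i => (Fin.castSucc_lt_last i).ne
  have hY : ∀ j, (Jm n * gᴴ * Jm n) (Fin.last n) j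
      = if j = Fin.last n then star (g (Fin.last n) (Fin.last n)) else -(star (g j (Fin.last n))) := by
    intro j
    by_cases h : j = Fin.last n
    · subst h; simp [Jm, Matrix.mul_diagonal, Matrix.diagonal_mul, Matrix.conjTranspose_apply]
    · simp [Jm, Matrix.mul_diagonal, Matrix.diagonal_mul, Matrix.conjTranspose_apply, h]
  have hX : ∀ m, (Jm n * gᴴ * Jm n * k) (Fin.last n) m
      = ∑ j, (if j = Fin.last n then star (g (Fin.last n) (Fin.last n))
          else -(star (g j (Fin.last n)))) * k j m := by
    intro m
    rw [Matrix.mul_apply]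
    exact Finset.sum_congr rfl fun j _ => by rw [hY j]
  have hX0 : (Jm n * gᴴ * Jm n * k) (Fin.last n) 0
      = -(∑ i : Fin n, star (g (Fin.castSucc i) (Fin.last n)) * k (Fin.castSucc i) 0) := by
    rw [hX, Fin.sum_univ_castSucc]
    simp only [hcs, if_neg, ite_false, ite_true, if_pos rfl, (hkblk 0 h0N).2, mul_zero, add_zero,
      neg_mul, ← Finset.sum_neg_distrib]
  have hXN : (Jm n * gᴴ * Jm n * k) (Fin.last n) (Fin.last n)
      = star (g (Fin.last n) (Fin.last n)) * k (Fin.last n) (Fin.last n) := by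
    rw [hX, Fin.sum_univ_castSucc]
    simp only [hcs, if_neg, ite_false, ite_true, if_pos rfl]
    rw [Finset.sum_eq_zero fun i _ => by rw [(hkblk _ (hcs i)).1, mul_zero], zero_add]
  have hat0 : ∀ p, atm n t p 0 = if p = 0 then ((Real.cosh t : ℝ) : Quaternion ℝ)
      else if p = Fin.last n then ((Real.sinh t : ℝ) : Quaternion ℝ) else 0 := by
    intro p
    simp only [atm, Matrix.of_apply, ← Quaternion.algebraMap_def]
    split_ifs <;> tauto
  have hatN : ∀ p, atm n t p (Fin.last n) = if p = Fin.last n then ((Real.cosh t : ℝ) : Quaternion ℝ)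
      else if p = 0 then ((Real.sinh t : ℝ) : Quaternion ℝ) else 0 := by
    intro p
    simp only [atm, Matrix.of_apply, ← Quaternion.algebraMap_def]
    split_ifs <;> tauto
  constructor
  · rw [Matrix.mul_apply, Finset.sum_congr rfl fun p _ => by rw [hat0 p],
      two_term_sum h0N _ 0 (Fin.last n) h0N, hX0, hXN]
  · rw [Matrix.mul_apply, Finset.sum_congr rfl fun p _ => by rw [hatN p],
      two_term_sum h0N _ (Fin.last n) 0 (Ne.symm h0N), hXN, hX0]
    rw [add_comm]

lemma normdiff (A S : Quaternion ℝ) (c s : ℝ) :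
    ‖A * ((c:ℝ):Quaternion ℝ) - S * ((s:ℝ):Quaternion ℝ)‖^2
      - ‖A * ((s:ℝ):Quaternion ℝ) - S * ((c:ℝ):Quaternion ℝ)‖^2
    = (‖A‖^2 - ‖S‖^2) * (c^2 - s^2) := by
  have h : ∀ q : Quaternion ℝ, ‖q‖^2 = Quaternion.normSq q := fun q => by
    rw [sq, Quaternion.normSq_eq_norm_mul_self]
  simp only [h, Quaternion.mul_coe_eq_smul, Quaternion.normSq_def',
    Quaternion.re_sub, Quaternion.imI_sub, Quaternion.imJ_sub, Quaternion.imK_sub,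
    Quaternion.re_smul, Quaternion.imI_smul, Quaternion.imJ_smul, Quaternion.imK_smul,
    smul_eq_mul]
  ring
set_option maxHeartbeats 2000000 in
/-- For `g ∈ Sp(n,1)`, `k ∈ K = Sp(n) × Sp(1)` and `t ≥ 0`,
`0 ≤ A⁺(g⁻¹ k exp(tH)) - H(g⁻¹ k exp(tH)) ≤ ((1+|g·0|)/(1-|g·0|)) e^(-2t)`
(here `g⁻¹ = J gᴴ J`). -/
theorem stmt11 (n : ℕ) (hn : 1 ≤ n)
    (g : Matrix (Fin (n+1)) (Fin (n+1)) (Quaternion ℝ)) (hg : g ∈ SpGrp n)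
    (k : Matrix (Fin (n+1)) (Fin (n+1)) (Quaternion ℝ)) (hk : inK n k)
    (t : ℝ) (ht : 0 ≤ t) :
    0 ≤ Aplus n (Jm n * gᴴ * Jm n * k * atm n t) -
        Hiw n (Jm n * gᴴ * Jm n * k * atm n t) ∧
      Aplus n (Jm n * gᴴ * Jm n * k * atm n t) -
          Hiw n (Jm n * gᴴ * Jm n * k * atm n t) ≤
        ((1 + normg0 n g) / (1 - normg0 n g)) * Real.exp (-2 * t) := by
  obtain ⟨hkSp, hkblk⟩ := hk
  have h0N : (0 : Fin (n+1)) ≠ Fin.last n := by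
    simp [Fin.ext_iff, Fin.last]; omega
  have hcs : ∀ i : Fin n, (Fin.castSucc i : Fin (n+1)) ≠ Fin.last n :=
    fun i => (Fin.castSucc_lt_last i).ne
  set d : Quaternion ℝ := g (Fin.last n) (Fin.last n) with hd
  set δ : ℝ := ‖d‖ with hδ
  set κ : Quaternion ℝ := k (Fin.last n) (Fin.last n) with hκdef
  set S : Quaternion ℝ :=
    ∑ i : Fin n, star (g (Fin.castSucc i) (Fin.last n)) * k (Fin.castSucc i) 0 with hSdef
  -- column norms of g
  have hgcol : ∑ i : Fin n, ‖g (Fin.castSucc i) (Fin.last n)‖^2 = δ^2 - 1 := by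
    have := colNormSq hg (Fin.last n)
    rw [if_pos rfl] at this; linarith
  have hδ1 : 1 ≤ δ := by
    have h1 : (0:ℝ) ≤ ∑ i : Fin n, ‖g (Fin.castSucc i) (Fin.last n)‖^2 :=
      Finset.sum_nonneg fun i _ => sq_nonneg _
    nlinarith [norm_nonneg d]
  -- k column norms
  have hkcol : ∑ i : Fin n, ‖k (Fin.castSucc i) 0‖^2 = 1 := by
    have := colNormSq hkSp 0
    rw [if_neg h0N, (hkblk 0 h0N).2] at this
    simpa using this
  have hκ : ‖κ‖ = 1 := by
    have := colNormSq hkSp (Fin.last n)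
    rw [if_pos rfl, Finset.sum_eq_zero fun i _ => by
      rw [(hkblk _ (hcs i)).1]; simp] at this
    have h2 : ‖κ‖^2 = 1 := by rw [← hκdef] at this; linarith
    nlinarith [norm_nonneg κ]
  set s : ℝ := Real.sqrt (δ^2 - 1) with hsdef
  have hs0 : 0 ≤ s := Real.sqrt_nonneg _
  have hs2 : s^2 = δ^2 - 1 := Real.sq_sqrt (by nlinarith)
  have hsδ : s < δ := by nlinarith
  -- Cauchy-Schwarz : ‖S‖ ≤ s
  set σ : ℝ := ‖S‖ with hσdef
  have hσ0 : 0 ≤ σ := norm_nonneg _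
  have hσs : σ ≤ s := by
    have h1 : σ ≤ ∑ i : Fin n, ‖g (Fin.castSucc i) (Fin.last n)‖ * ‖k (Fin.castSucc i) 0‖ := by
      refine (norm_sum_le _ _).trans ?_
      refine Finset.sum_le_sum fun i _ => ?_
      rw [norm_mul, norm_star]
    have h2 := Finset.sum_mul_sq_le_sq_mul_sq Finset.univ
      (fun i : Fin n => ‖g (Fin.castSucc i) (Fin.last n)‖) (fun i => ‖k (Fin.castSucc i) 0‖)
    rw [hgcol, hkcol, mul_one] at h2
    have h3 : 0 ≤ ∑ i : Fin n, ‖g (Fin.castSucc i) (Fin.last n)‖ * ‖k (Fin.castSucc i) 0‖ :=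
      Finset.sum_nonneg fun i _ => mul_nonneg (norm_nonneg _) (norm_nonneg _)
    nlinarith
  set A : Quaternion ℝ := star d * κ with hAdef
  have hA : ‖A‖ = δ := by rw [hAdef, norm_mul, norm_star, hκ, mul_one]
  -- entries
  obtain ⟨hC, hD⟩ := G_entries n hn g k hkblk t
  rw [← hd, ← hκdef, ← hSdef, ← hAdef] at hC hD
  set G := Jm n * gᴴ * Jm n * k * atm n t with hG
  set C : Quaternion ℝ := G (Fin.last n) 0 with hCdef
  set D : Quaternion ℝ := G (Fin.last n) (Fin.last n) with hDdef
  have hAp : Aplus n G = Real.log (‖D‖ + Real.sqrt (‖D‖^2 - 1)) := by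
    rw [Aplus, ← hDdef]
  have hHiw : Hiw n G = Real.log ‖C + D‖ := by
    rw [Hiw, ← hCdef, ← hDdef]
  clear_value C D
  clear hCdef hDdef hG
  have hCD : C + D = (A - S) * ((Real.exp t : ℝ) : Quaternion ℝ) := by
    rw [hC, hD, ← Real.cosh_add_sinh]
    push_cast
    noncomm_ring
  have hD2 : D + D = (A - S) * ((Real.exp t : ℝ) : Quaternion ℝ)
      + (A + S) * ((Real.exp (-t) : ℝ) : Quaternion ℝ) := by
    rw [hD, ← Real.cosh_add_sinh, ← Real.cosh_sub_sinh]
    push_cast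
    noncomm_ring
  set u : ℝ := ‖A - S‖ with hudef
  have hu : δ - σ ≤ u := by
    have := norm_sub_norm_le A S
    rw [hA] at this; linarith
  have hu0 : 0 < u := by linarith [hσs, hsδ]
  have hnCD : ‖C + D‖ = u * Real.exp t := by
    rw [hCD, norm_mul, Quaternion.norm_coe, Real.norm_eq_abs, Real.abs_exp]
  -- norm difference identity
  have hDC : ‖D‖^2 - ‖C‖^2 = δ^2 - σ^2 := by
    have h1 : D = A * ((Real.cosh t : ℝ) : Quaternion ℝ) - S * ((Real.sinh t : ℝ) : Quaternion ℝ) := by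
      rw [hD]; noncomm_ring
    have h2 : C = A * ((Real.sinh t : ℝ) : Quaternion ℝ) - S * ((Real.cosh t : ℝ) : Quaternion ℝ) := by
      rw [hC]; noncomm_ring
    rw [h1, h2, normdiff, hA, Real.cosh_sq_sub_sinh_sq, mul_one]
  clear_value d κ S A δ σ s u
  have hnD0 : 0 ≤ ‖D‖ := norm_nonneg _
  have hnC0 : 0 ≤ ‖C‖ := norm_nonneg _
  have hD1 : 1 ≤ ‖D‖^2 - ‖C‖^2 := by nlinarith
  have hsqrtC : ‖C‖ ≤ Real.sqrt (‖D‖^2 - 1) := by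
    calc ‖C‖ = Real.sqrt (‖C‖^2) := (Real.sqrt_sq hnC0).symm
    _ ≤ Real.sqrt (‖D‖^2 - 1) := Real.sqrt_le_sqrt (by nlinarith)
  set a : ℝ := u * Real.exp t with hadef
  set b : ℝ := (δ + s) * Real.exp (-t) with hbdef
  have ha0 : 0 < a := mul_pos hu0 (Real.exp_pos t)
  have hb0 : 0 < b := mul_pos (by nlinarith) (Real.exp_pos _)
  clear_value a b
  have hHi : Hiw n G = Real.log a := by rw [hHiw, hnCD]
  -- lower bound
  have hlow : a ≤ ‖D‖ + Real.sqrt (‖D‖^2 - 1) := by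
    calc a = ‖C + D‖ := hnCD.symm
    _ ≤ ‖C‖ + ‖D‖ := norm_add_le _ _
    _ ≤ ‖D‖ + Real.sqrt (‖D‖^2 - 1) := by linarith
  -- upper bound on ‖D‖
  have hDle : ‖D‖ ≤ (a + b) / 2 := by
    have h1 : ‖D + D‖ ≤ a + ‖A + S‖ * Real.exp (-t) := by
      rw [hD2]
      refine (norm_add_le _ _).trans ?_
      rw [norm_mul, norm_mul, Quaternion.norm_coe, Quaternion.norm_coe,
        Real.norm_eq_abs, Real.norm_eq_abs, Real.abs_exp, Real.abs_exp, hadef, hudef]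
    have h2 : ‖A + S‖ ≤ δ + s := by
      have := norm_add_le A S
      rw [hA] at this; linarith
    have h3 : ‖D + D‖ = 2 * ‖D‖ := by
      rw [show D + D = (2:ℝ) • D by rw [two_smul], norm_smul]
      simp
    have h4 : 0 < Real.exp (-t) := Real.exp_pos _
    nlinarith
  have hDup : ‖D‖ + Real.sqrt (‖D‖^2 - 1) ≤ a + b := by
    have h1 : Real.sqrt (‖D‖^2 - 1) ≤ (a + b) / 2 := by
      calc Real.sqrt (‖D‖^2 - 1) ≤ Real.sqrt (((a+b)/2)^2) := Real.sqrt_le_sqrt (by nlinarith)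
      _ = (a+b)/2 := Real.sqrt_sq (by linarith)
    linarith
  constructor
  · rw [hAp, hHi]
    have := Real.log_le_log ha0 hlow
    linarith
  · -- upper bound
    have hup1 : Aplus n G - Hiw n G ≤ Real.log ((a+b)/a) := by
      rw [hAp, hHi]
      have h2 : Real.log (‖D‖ + Real.sqrt (‖D‖^2 - 1)) ≤ Real.log (a+b) :=
        Real.log_le_log (lt_of_lt_of_le ha0 hlow) hDup
      rw [Real.log_div (by linarith : (a+b) ≠ 0) (ne_of_gt ha0)]
      linarith
    have hup2 : Real.log ((a+b)/a) ≤ b / a := by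
      have h := Real.log_le_sub_one_of_pos (show (0:ℝ) < (a+b)/a from div_pos (by linarith) ha0)
      have h2 : (a+b)/a - 1 = b/a := by field_simp; ring
      linarith
    have hds : 0 < δ - s := by linarith
    have e1 : b / a = ((δ+s)/u) * Real.exp (-2*t) := by
      rw [hbdef, hadef, show (-2:ℝ)*t = -t - t by ring, Real.exp_sub]
      field_simp [(Real.exp_pos t).ne']
    have hba : b / a ≤ ((δ+s)/(δ-s)) * Real.exp (-2*t) := by
      rw [e1]
      have h3 : (δ+s)/u ≤ (δ+s)/(δ-s) :=
        div_le_div_of_nonneg_left (by linarith) hds (by linarith)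
      exact mul_le_mul_of_nonneg_right h3 (Real.exp_pos _).le
    have hng : normg0 n g = s / δ := by
      rw [normg0]
      have hterm : ∀ i : Fin n, ‖g (Fin.castSucc i) (Fin.last n) * (g (Fin.last n) (Fin.last n))⁻¹‖^2
          = ‖g (Fin.castSucc i) (Fin.last n)‖^2 * (δ⁻¹)^2 := by
        intro i; rw [norm_mul, norm_inv, ← hd, ← hδ]; ring
      rw [Finset.sum_congr rfl fun i _ => hterm i, ← Finset.sum_mul, hgcol]
      have hδ0 : (0:ℝ) < δ := by linarith
      rw [show (δ^2 - 1) * (δ⁻¹)^2 = (s/δ)^2 by rw [← hs2]; field_simp]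
      exact Real.sqrt_sq (by positivity)
    have hfrac : (1 + normg0 n g) / (1 - normg0 n g) = (δ+s)/(δ-s) := by
      rw [hng]
      have hδ0 : (0:ℝ) < δ := by linarith
      have hne : (1:ℝ) - s/δ ≠ 0 := by
        rw [show (1:ℝ) - s/δ = (δ-s)/δ by field_simp]
        exact ne_of_gt (div_pos hds hδ0)
      rw [div_eq_div_iff hne (ne_of_gt hds)]
      field_simp
    rw [hfrac]
    linarith
end
end

section
/- Let g = [[a,b],[c,d]] ∈ Sp(n,1) and write g = κ₁(g) a_{A⁺(g)} κ₂(g) for the Cartan decomposition with κ₁(g), κ₂(g) ∈ K = Sp(n)×Sp(1). If κᵢ(g) has Sp(1)-component vᵢ, then v₁v₂ = d/|d|, i.e. τ_ν(κ₁(g)κ₂(g)) = τ_ν(d/|d|) for any representation τ_ν of Sp(1) extended trivially to K. -/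
open Matrix

noncomputable section

lemma norm_corner_of_inK (n : ℕ) (k : Matrix (Fin (n+1)) (Fin (n+1)) (Quaternion ℝ))
    (hk : inK n k) : ‖k (Fin.last n) (Fin.last n)‖ = 1 := by
  have h := hk.1
  have he : (kᴴ * Jm n * k) (Fin.last n) (Fin.last n) = Jm n (Fin.last n) (Fin.last n) := by
    rw [h]
  rw [Jm] at he
  rw [Matrix.mul_apply] at he
  have hsum : ∀ i ∈ Finset.univ, i ≠ Fin.last n →
      (kᴴ * Matrix.diagonal fun i => if i = Fin.last n then (-1 : Quaternion ℝ) else 1)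
        (Fin.last n) i * k i (Fin.last n) = 0 := by
    intro i _ hi
    rw [(hk.2 i hi).1, mul_zero]
  rw [Finset.sum_eq_single_of_mem (Fin.last n) (Finset.mem_univ _) hsum] at he
  rw [Matrix.mul_diagonal] at he
  simp only [Matrix.conjTranspose_apply, if_pos rfl, Matrix.diagonal_apply_eq] at he
  -- he : star (k last last) * -1 * k last last = -1
  have h2 : star (k (Fin.last n) (Fin.last n)) * k (Fin.last n) (Fin.last n) = 1 := by
    have := he
    simp only [if_true, mul_neg_one, neg_mul, neg_inj] at this
    exact this
  rw [Quaternion.star_mul_self] at h2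
  have h3 : Quaternion.normSq (k (Fin.last n) (Fin.last n)) = 1 := by
    have h1 : ((1:ℝ) : Quaternion ℝ) = 1 := by norm_num
    rw [← h1] at h2
    exact Quaternion.coe_injective h2
  rw [Quaternion.normSq_eq_norm_mul_self] at h3
  nlinarith [norm_nonneg (k (Fin.last n) (Fin.last n))]

/-- Let `g = [[a,b],[c,d]] ∈ Sp(n,1)` with Cartan decomposition `g = κ₁(g) a_t κ₂(g)`,
`t ≥ 0`, `κ₁, κ₂ ∈ K = Sp(n) × Sp(1)` with `Sp(1)` components `v₁, v₂`. Then
`v₁ v₂ = d/|d|`, i.e. `τ_ν(κ₁(g)κ₂(g)) = τ_ν(d/|d|)` for every representation `τ_ν`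
of `Sp(1)` extended trivially to `K`. -/
theorem stmt17 (n : ℕ) (hn : 1 ≤ n)
    (g : Matrix (Fin (n+1)) (Fin (n+1)) (Quaternion ℝ)) (hg : g ∈ SpGrp n)
    (k₁ k₂ : Matrix (Fin (n+1)) (Fin (n+1)) (Quaternion ℝ)) (t : ℝ)
    (hk₁ : inK n k₁) (hk₂ : inK n k₂) (ht : 0 ≤ t)
    (hdec : g = k₁ * atm n t * k₂) :
    k₁ (Fin.last n) (Fin.last n) * k₂ (Fin.last n) (Fin.last n) =
      g (Fin.last n) (Fin.last n) /
        algebraMap ℝ (Quaternion ℝ) ‖g (Fin.last n) (Fin.last n)‖ ∧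
    ∀ {M : Type} (τ : Quaternion ℝ → M),
      τ (k₁ (Fin.last n) (Fin.last n) * k₂ (Fin.last n) (Fin.last n)) =
        τ (g (Fin.last n) (Fin.last n) /
          algebraMap ℝ (Quaternion ℝ) ‖g (Fin.last n) (Fin.last n)‖) := by
  set l := Fin.last n with hl
  set v₁ := k₁ l l
  set v₂ := k₂ l l
  -- compute g l l
  have hd : g l l = algebraMap ℝ (Quaternion ℝ) (Real.cosh t) * (v₁ * v₂) := by
    rw [hdec]
    rw [Matrix.mul_apply]
    rw [Finset.sum_eq_single_of_mem l (Finset.mem_univ _)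
      (fun j _ hj => by rw [(hk₂.2 j hj).1, mul_zero])]
    rw [Matrix.mul_apply]
    rw [Finset.sum_eq_single_of_mem l (Finset.mem_univ _)
      (fun i _ hi => by rw [(hk₁.2 i hi).2, zero_mul])]
    have hall : atm n t l l = algebraMap ℝ (Quaternion ℝ) (Real.cosh t) := by
      simp [atm, hl]
    rw [hall]
    rw [← mul_assoc, ← Algebra.commutes, mul_assoc]
  have hv₁ : ‖v₁‖ = 1 := norm_corner_of_inK n k₁ hk₁
  have hv₂ : ‖v₂‖ = 1 := norm_corner_of_inK n k₂ hk₂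
  have hnorm : ‖g l l‖ = Real.cosh t := by
    rw [hd, norm_mul, norm_mul, hv₁, hv₂]
    have : ‖algebraMap ℝ (Quaternion ℝ) (Real.cosh t)‖ = |Real.cosh t| := by
      simpa using Quaternion.norm_coe (Real.cosh t)
    rw [this, abs_of_pos (Real.cosh_pos t)]
    ring
  have hc0 : algebraMap ℝ (Quaternion ℝ) (Real.cosh t) ≠ 0 := by
    intro h
    have h' : ((Real.cosh t : ℝ) : Quaternion ℝ) = ((0:ℝ) : Quaternion ℝ) := by
      simpa using h
    exact (Real.cosh_pos t).ne' (Quaternion.coe_injective h')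
  have key : v₁ * v₂ = g l l / algebraMap ℝ (Quaternion ℝ) ‖g l l‖ := by
    rw [hnorm, hd, div_eq_mul_inv, Algebra.commutes, mul_assoc,
      mul_inv_cancel₀ hc0, mul_one]
  exact ⟨key, fun τ => by rw [key]⟩
end
end
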